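/- Let j ≥ 3 and s ≥ 1 with j odd and s odd, and let d be an even integer with 0 ≤ d ≤ (j-1)s - 1. Then there exists a d-regular spanning subgraph of the complete multipartite graph K_{j×s}. -/

import Mathlib

/-- The complete balanced multipartite graph `K_{j×s}` on `Fin j × Fin s`:
vertices are adjacent iff they lie in different parts (different first coordinate). -/
def multiK (j s : ℕ) : SimpleGraph (Fin j × Fin s) where
  Adj u v := u.1 ≠ v.1
  symm := ⟨fun _ _ h => Ne.symm h⟩
  loopless := ⟨fun _ h => h rfl⟩

/-- Degree of a vertex, via `Set.ncard` of its neighbor set. -/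
noncomputable def mdeg {V : Type*} (G : SimpleGraph V) (v : V) : ℕ :=
  (G.neighborSet v).ncard

/-- `K_{j×s} → (S_n, S_m)`: every red/blue edge coloring (red subgraph `R ≤ K_{j×s}`,
blue the rest) contains a red `K_{1,n-1}` or a blue `K_{1,m-1}`. -/
def Arrows (j s n m : ℕ) : Prop :=
  ∀ R : SimpleGraph (Fin j × Fin s), R ≤ multiK j s →
    (∃ v, n - 1 ≤ mdeg R v) ∨ (∃ v, m - 1 ≤ mdeg (multiK j s \ R) v)

/-- The size Ramsey multipartite number `m_j(S_n, S_m)`. -/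
noncomputable def mj (j n m : ℕ) : ℕ := sInf {s | Arrows j s n m}

theorem stmt6 (j s d : ℕ) (hj : 3 ≤ j) (hs : 1 ≤ s)
    (hjo : Odd j) (hso : Odd s) (hd : Even d) (hdle : d ≤ (j - 1) * s - 1) :
    ∃ H : SimpleGraph (Fin j × Fin s), H ≤ multiK j s ∧ ∀ v, mdeg H v = d := by
  obtain ⟨e, rfl⟩ : ∃ e, j = e + 1 := ⟨j - 1, by omega⟩
  have he2 : 2 ≤ e := by omega
  have hdle' : d ≤ e * s - 1 := by simpa using hdle
  obtain ⟨t, ht⟩ := hd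
  obtain ⟨c, hc⟩ := hjo
  have hce : e = 2 * c := by omega
  -- basic arithmetic
  have hd2 : d + 2 ≤ e * s := by
    have h0 : 0 < e * s := Nat.mul_pos (by omega) hs
    obtain ⟨w, hw⟩ : ∃ w, e * s = w + w := ⟨c * s, by rw [hce]; ring⟩
    rw [hw] at h0 hdle' ⊢
    omega
  set n := (e + 1) * s with hn
  have hn0 : 0 < n := Nat.mul_pos (by omega) hs
  haveI : NeZero n := ⟨hn0.ne'⟩
  have hjn : (e + 1) ∣ n := ⟨s, rfl⟩
  set q := (d / 2) / e with hq
  set r := (d / 2) % e with hr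
  have hrlt : r < e := Nat.mod_lt _ (by omega)
  have hqr : e * q + r = d / 2 := Nat.div_add_mod _ _
  have hd2' : d / 2 + d / 2 = d := by omega
  set m := q * e + q + r with hm
  have h2q : 2 * q < s := by
    have h1 : e * (2 * q) < e * s := by nlinarith [hqr, hd2, hd2']
    exact Nat.lt_of_mul_lt_mul_left h1
  have hmn : 2 * m + 1 < n := by
    have hC : (e + 1) * s = e * s + s := by ring
    rw [hn, hm, hC]
    nlinarith [hqr, hd2, hd2', h2q]
  have hqr' : q * e + r = d / 2 := by rw [Nat.mul_comm]; exact hqr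
  have hmq : m - q = d / 2 := by omega
  -- the connection set
  set A : Finset ℕ :=
    ((Finset.Icc 1 m) ∪ (Finset.Icc (n - m) (n - 1))).filter (fun k => ¬ (e + 1) ∣ k) with hA
  have hmemA : ∀ k, k ∈ A ↔
      ((1 ≤ k ∧ k ≤ m) ∨ (n - m ≤ k ∧ k ≤ n - 1)) ∧ ¬ (e + 1) ∣ k := by
    intro k
    simp [hA, Finset.mem_filter, Finset.mem_union, Finset.mem_Icc]
  have hA0 : (0 : ℕ) ∉ A := by
    rw [hmemA]; intro hk; exact hk.2 (dvd_zero _)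
  have hAbound : ∀ k ∈ A, 0 < k ∧ k < n := by
    intro k hk; rw [hmemA] at hk
    rcases hk.1 with h | h <;> omega
  have hAsym : ∀ k ∈ A, n - k ∈ A := by
    intro k hk; rw [hmemA] at hk ⊢
    obtain ⟨hb, hnd⟩ := hk
    refine ⟨by omega, ?_⟩
    intro hdvd
    apply hnd
    have hk' : k = n - (n - k) := by omega
    rw [hk']
    exact Nat.dvd_sub hjn hdvd
  -- cardinality of A
  have hcard : A.card = d := by
    have hIoc : Finset.Icc 1 m = Finset.Ioc 0 m := by
      ext k; simp [Finset.mem_Icc, Finset.mem_Ioc]; omega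
    have hdisj : Disjoint ((Finset.Icc 1 m).filter (fun k => ¬ (e + 1) ∣ k))
        ((Finset.Icc (n - m) (n - 1)).filter (fun k => ¬ (e + 1) ∣ k)) := by
      rw [Finset.disjoint_left]
      intro k h1 h2
      simp only [Finset.mem_filter, Finset.mem_Icc] at h1 h2
      omega
    have hsplit : A.card = ((Finset.Icc 1 m).filter (fun k => ¬ (e + 1) ∣ k)).card +
        ((Finset.Icc (n - m) (n - 1)).filter (fun k => ¬ (e + 1) ∣ k)).card := by
      rw [hA, Finset.filter_union, Finset.card_union_of_disjoint hdisj]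
    have hdivm : m / (e + 1) = q := by
      have hm' : m = r + q * (e + 1) := by rw [hm]; ring
      rw [hm', Nat.add_mul_div_right _ _ (by omega : 0 < e + 1),
        Nat.div_eq_of_lt (by omega), Nat.zero_add]
    have hcard1 : ((Finset.Icc 1 m).filter (fun k => ¬ (e + 1) ∣ k)).card = m - q := by
      have h1 := Finset.card_filter_add_card_filter_not
        (s := Finset.Icc 1 m) (p := fun k => (e + 1) ∣ k)
      have h2 : ((Finset.Icc 1 m).filter (fun k => (e + 1) ∣ k)).card = q := by
        rw [hIoc, Nat.Ioc_filter_dvd_card_eq_div, hdivm]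
      have h3 : (Finset.Icc 1 m).card = m := by
        rw [Nat.card_Icc]; omega
      omega
    have hcard2 : ((Finset.Icc (n - m) (n - 1)).filter (fun k => ¬ (e + 1) ∣ k)).card =
        ((Finset.Icc 1 m).filter (fun k => ¬ (e + 1) ∣ k)).card := by
      apply Finset.card_bij' (fun k _ => n - k) (fun k _ => n - k)
      · intro k hk
        simp only [Finset.mem_filter, Finset.mem_Icc] at hk ⊢
        refine ⟨by omega, ?_⟩
        intro hdvd
        apply hk.2
        have hk' : k = n - (n - k) := by omega
        rw [hk']
        exact Nat.dvd_sub hjn hdvd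
      · intro k hk
        simp only [Finset.mem_filter, Finset.mem_Icc] at hk ⊢
        refine ⟨by omega, ?_⟩
        intro hdvd
        apply hk.2
        have hk' : k = n - (n - k) := by omega
        rw [hk']
        exact Nat.dvd_sub hjn hdvd
      · intro k hk
        simp only [Finset.mem_filter, Finset.mem_Icc] at hk
        omega
      · intro k hk
        simp only [Finset.mem_filter, Finset.mem_Icc] at hk
        omega
    omega
  -- the encoding map
  set f : Fin (e + 1) × Fin s → ZMod n :=
    (fun p => ((p.1.1 + (e + 1) * p.2.1 : ℕ) : ZMod n)) with hf
  have hflt : ∀ p : Fin (e + 1) × Fin s, p.1.1 + (e + 1) * p.2.1 < n := by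
    intro p
    have h1 := p.1.2
    have h2 : (e + 1) * (p.2.1 + 1) ≤ (e + 1) * s := Nat.mul_le_mul_left _ p.2.2
    have h3 : (e + 1) * (p.2.1 + 1) = (e + 1) * p.2.1 + (e + 1) := by ring
    rw [hn]
    omega
  have hfval : ∀ p : Fin (e + 1) × Fin s, (f p).val = p.1.1 + (e + 1) * p.2.1 := by
    intro p
    exact ZMod.val_cast_of_lt (hflt p)
  have hfinj : Function.Injective f := by
    intro p p' hpq
    have hv := congrArg ZMod.val hpq
    rw [hfval, hfval] at hv
    have ha1 := p.1.2
    have ha2 := p'.1.2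
    have hb : p.2.1 = p'.2.1 := by
      by_contra hne
      rcases Nat.lt_or_ge p.2.1 p'.2.1 with h | h
      · have h1 : (e + 1) * (p.2.1 + 1) ≤ (e + 1) * p'.2.1 :=
          Nat.mul_le_mul_left _ (by omega)
        have h2 : (e + 1) * (p.2.1 + 1) = (e + 1) * p.2.1 + (e + 1) := by ring
        omega
      · have h : p'.2.1 < p.2.1 := by omega
        have h1 : (e + 1) * (p'.2.1 + 1) ≤ (e + 1) * p.2.1 :=
          Nat.mul_le_mul_left _ (by omega)
        have h2 : (e + 1) * (p'.2.1 + 1) = (e + 1) * p'.2.1 + (e + 1) := by ring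
        omega
    have ha : p.1.1 = p'.1.1 := by rw [hb] at hv; omega
    exact Prod.ext_iff.mpr ⟨Fin.ext ha, Fin.ext hb⟩
  have hfsurj : Function.Surjective f := by
    have hcardeq : Fintype.card (Fin (e + 1) × Fin s) = Fintype.card (ZMod n) := by
      rw [Fintype.card_prod, Fintype.card_fin, Fintype.card_fin, ZMod.card]
    exact ((Fintype.bijective_iff_injective_and_card f).mpr ⟨hfinj, hcardeq⟩).surjective
  -- divisibility of values of multiples of e+1
  have hjx : ∀ x : ZMod n, (e + 1) ∣ (((e + 1 : ℕ) : ZMod n) * x).val := by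
    intro x
    rw [ZMod.val_mul]
    apply (Nat.dvd_mod_iff hjn).mpr
    apply Dvd.dvd.mul_right
    rw [ZMod.val_natCast]
    exact (Nat.dvd_mod_iff hjn).mpr dvd_rfl
  -- the graph
  refine ⟨⟨fun u v => ((f u - f v).val ∈ A), ?_, ?_⟩, ?_, ?_⟩
  · -- symmetric
    constructor
    intro u v h
    have hx0 : f u - f v ≠ 0 := by
      intro h0
      rw [h0, ZMod.val_zero] at h
      exact hA0 h
    have hneg : f v - f u = -(f u - f v) := by ring
    haveI : NeZero (f u - f v) := ⟨hx0⟩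
    show (f v - f u).val ∈ A
    rw [hneg, ZMod.val_neg_of_ne_zero]
    exact hAsym _ h
  · -- irreflexive
    constructor
    intro v h
    simp only [sub_self, ZMod.val_zero] at h
    exact hA0 h
  · -- subgraph of multiK
    intro u v h
    show u.1 ≠ v.1
    intro heq
    have h11 : (u.1.1 : ZMod n) = (v.1.1 : ZMod n) := by rw [heq]
    have hexp : f u - f v =
        ((e + 1 : ℕ) : ZMod n) * (((u.2.1 : ℕ) : ZMod n) - ((v.2.1 : ℕ) : ZMod n)) := by
      simp only [hf]
      push_cast
      rw [h11]
      ring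
    have hmem : (f u - f v).val ∈ A := h
    rw [hmemA] at hmem
    apply hmem.2
    rw [hexp]
    exact hjx _
  · -- degrees
    intro u
    have hbij : Set.BijOn (fun v => (f u - f v).val)
        ({v | (f u - f v).val ∈ A}) (↑A : Set ℕ) := by
      refine ⟨?_, ?_, ?_⟩
      · intro v hv
        simpa using hv
      · intro v1 h1 v2 h2 hval
        have h3 : f u - f v1 = f u - f v2 := ZMod.val_injective n hval
        have h4 : f v1 = f v2 := by linear_combination -h3
        exact hfinj h4
      · intro k hk
        simp only [Finset.coe_sort_coe, Finset.mem_coe] at hk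
        obtain ⟨v, hv⟩ := hfsurj (f u - ((k : ℕ) : ZMod n))
        have hklt : k < n := (hAbound k hk).2
        have hval : (f u - f v).val = k := by
          rw [hv, sub_sub_cancel]
          exact ZMod.val_cast_of_lt hklt
        refine ⟨v, ?_, hval⟩
        show (f u - f v).val ∈ A
        rw [hval]; exact hk
    show ({v | (f u - f v).val ∈ A} : Set (Fin (e + 1) × Fin s)).ncard = d
    rw [← Set.ncard_image_of_injOn hbij.injOn, hbij.image_eq, Set.ncard_coe_finset, hcard]
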